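/- The function F(r) = 1 - exp(-2λr) + 2λr·exp(-2λr) - 4λ²r²·E₁(2λr), where E₁(z) = ∫_z^∞ t⁻¹e^(-t) dt, is a valid cumulative distribution function on (0,∞): it is monotone nondecreasing, tends to 0 as r → 0⁺, and tends to 1 as r → ∞. -/

import Mathlib

open Real MeasureTheory Filter

noncomputable def E1 (z : ℝ) : ℝ := ∫ t in Set.Ioi z, Real.exp (-t) / t

noncomputable def F (lam r : ℝ) : ℝ :=
  1 - Real.exp (-2 * lam * r) + 2 * lam * r * Real.exp (-2 * lam * r)
    - 4 * lam ^ 2 * r ^ 2 * E1 (2 * lam * r)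

lemma contOn_f {z : ℝ} (hz : 0 < z) :
    ContinuousOn (fun t : ℝ => Real.exp (-t) / t) (Set.Ioi z) := by
  apply ContinuousOn.div
  · exact (Real.continuous_exp.comp continuous_neg).continuousOn
  · exact continuous_id.continuousOn
  · intro t ht; exact ne_of_gt (lt_trans hz ht)

lemma integrableOn_f {z : ℝ} (hz : 0 < z) :
    IntegrableOn (fun t : ℝ => Real.exp (-t) / t) (Set.Ioi z) := by
  apply Integrable.mono' ((exp_neg_integrableOn_Ioi z one_pos).const_mul z⁻¹)
  · exact ((contOn_f hz).aestronglyMeasurable measurableSet_Ioi)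
  · filter_upwards [ae_restrict_mem measurableSet_Ioi] with t ht
    have htz : z < t := ht
    have ht0 : 0 < t := lt_trans hz htz
    rw [Real.norm_eq_abs, abs_of_nonneg (by positivity), neg_one_mul, div_eq_inv_mul]
    exact mul_le_mul_of_nonneg_right (by
      apply inv_anti₀ hz htz.le) (Real.exp_pos _).le
  
lemma E1_nonneg {z : ℝ} (hz : 0 < z) : 0 ≤ E1 z := by
  apply setIntegral_nonneg measurableSet_Ioi
  intro t ht
  have : 0 < t := lt_trans hz ht
  positivity

lemma E1_le {z : ℝ} (hz : 0 < z) : E1 z ≤ Real.exp (-z) / z := by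
  have h : E1 z ≤ ∫ t in Set.Ioi z, z⁻¹ * Real.exp (-1 * t) := by
    apply setIntegral_mono_on (integrableOn_f hz)
      ((exp_neg_integrableOn_Ioi z one_pos).const_mul z⁻¹) measurableSet_Ioi
    intro t ht
    have htz : z < t := ht
    have ht0 : 0 < t := lt_trans hz htz
    rw [div_le_iff₀ ht0, neg_one_mul]
    calc Real.exp (-t) = z⁻¹ * Real.exp (-t) * z := by field_simp
      _ ≤ z⁻¹ * Real.exp (-t) * t := by
          have : (0:ℝ) ≤ z⁻¹ * Real.exp (-t) := by positivity
          nlinarith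
  rw [MeasureTheory.integral_const_mul] at h
  have : (∫ t in Set.Ioi z, Real.exp (-1 * t)) = Real.exp (-z) := by
    simp only [neg_one_mul]
    exact integral_exp_neg_Ioi z
  rw [this] at h
  rw [div_eq_inv_mul]
  exact h

lemma E1_le' {z : ℝ} (hz : 0 < z) : E1 z ≤ 2 / z * Real.exp (-z / 2) := by
  have h : E1 z ≤ ∫ t in Set.Ioi z, z⁻¹ * Real.exp (-(2⁻¹) * t) := by
    apply setIntegral_mono_on (integrableOn_f hz)
      ((exp_neg_integrableOn_Ioi z (by norm_num)).const_mul z⁻¹) measurableSet_Ioi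
    intro t ht
    have htz : z < t := ht
    have ht0 : 0 < t := lt_trans hz htz
    rw [div_le_iff₀ ht0]
    have h1 : Real.exp (-t) ≤ Real.exp (-(2⁻¹) * t) := by
      apply Real.exp_le_exp.mpr; nlinarith
    calc Real.exp (-t) ≤ Real.exp (-(2⁻¹) * t) := h1
      _ = z⁻¹ * Real.exp (-(2⁻¹) * t) * z := by field_simp
      _ ≤ z⁻¹ * Real.exp (-(2⁻¹) * t) * t := by
          have : (0:ℝ) ≤ z⁻¹ * Real.exp (-(2⁻¹) * t) := by positivity
          nlinarith
  rw [MeasureTheory.integral_const_mul] at h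
  have hval : (∫ t in Set.Ioi z, Real.exp (-(2⁻¹) * t)) = 2 * Real.exp (-z / 2) := by
    have := MeasureTheory.integral_comp_mul_left_Ioi (fun x => Real.exp (-x)) z
      (by norm_num : (0:ℝ) < 2⁻¹)
    simp only [smul_eq_mul] at this
    rw [show (∫ t in Set.Ioi z, Real.exp (-(2⁻¹) * t)) =
        ∫ t in Set.Ioi z, Real.exp (-(2⁻¹ * t)) by
      congr 1; ext t; ring_nf] at *
    rw [this, integral_exp_neg_Ioi]
    rw [show -(2⁻¹ * z) = -z / 2 by ring]
    norm_num
  rw [hval] at h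
  calc E1 z ≤ z⁻¹ * (2 * Real.exp (-z / 2)) := h
    _ = 2 / z * Real.exp (-z / 2) := by field_simp

lemma hasDerivAt_E1 {z : ℝ} (hz : 0 < z) :
    HasDerivAt E1 (-(Real.exp (-z) / z)) z := by
  set f : ℝ → ℝ := fun t => Real.exp (-t) / t with hf
  set a := z / 2 with ha
  have ha0 : 0 < a := by positivity
  have haz : a < z := by simp [ha]; linarith
  have key : ∀ x ∈ Set.Ioi a, E1 x = E1 a - ∫ t in a..x, f t := by
    intro x hx
    have hax : a < x := hx
    rw [intervalIntegral.integral_of_le hax.le]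
    have hsplit : (∫ t in Set.Ioi a, f t) =
        (∫ t in Set.Ioc a x, f t) + ∫ t in Set.Ioi x, f t := by
      rw [← MeasureTheory.setIntegral_union]
      · rw [Set.Ioc_union_Ioi_eq_Ioi hax.le]
      · exact Set.Ioc_disjoint_Ioi le_rfl
      · exact measurableSet_Ioi
      · exact (integrableOn_f ha0).mono_set Set.Ioc_subset_Ioi_self
      · exact (integrableOn_f ha0).mono_set (Set.Ioi_subset_Ioi hax.le)
    show E1 x = E1 a - ∫ t in Set.Ioc a x, f t
    unfold E1
    rw [hsplit]; ring
  have hint : IntervalIntegrable f volume a z := by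
    rw [intervalIntegrable_iff_integrableOn_Ioc_of_le haz.le]
    exact (integrableOn_f ha0).mono_set Set.Ioc_subset_Ioi_self
  have hmeas : StronglyMeasurableAtFilter f (nhds z) := by
    exact ⟨Set.Ioi a, Ioi_mem_nhds haz,
      (contOn_f ha0).aestronglyMeasurable measurableSet_Ioi⟩
  have hcont : ContinuousAt f z := by
    apply ContinuousAt.div
    · exact (Real.continuous_exp.comp continuous_neg).continuousAt
    · exact continuousAt_id
    · exact hz.ne'
  have hd := (intervalIntegral.integral_hasDerivAt_right hint hmeas hcont).const_sub (E1 a)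
  apply hd.congr_of_eventuallyEq
  filter_upwards [Ioi_mem_nhds haz] with x hx
  exact key x hx

lemma hasDerivAt_F (lam : ℝ) (hlam : 0 < lam) {r : ℝ} (hr : 0 < r) :
    HasDerivAt (F lam)
      (4 * lam * Real.exp (-2 * lam * r) - 8 * lam ^ 2 * r * E1 (2 * lam * r)) r := by
  have hz : 0 < 2 * lam * r := by positivity
  have h1 : HasDerivAt (fun r : ℝ => -2 * lam * r) (-2 * lam) r := by
    simpa using (hasDerivAt_id r).const_mul (-2 * lam)
  have h2 : HasDerivAt (fun r : ℝ => 2 * lam * r) (2 * lam) r := by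
    simpa using (hasDerivAt_id r).const_mul (2 * lam)
  have hexp : HasDerivAt (fun r : ℝ => Real.exp (-2 * lam * r))
      (Real.exp (-2 * lam * r) * (-2 * lam)) r := h1.exp
  have hE : HasDerivAt (fun r : ℝ => E1 (2 * lam * r))
      (-(Real.exp (-(2 * lam * r)) / (2 * lam * r)) * (2 * lam)) r :=
    (hasDerivAt_E1 hz).comp r h2
  have hsq : HasDerivAt (fun r : ℝ => 4 * lam ^ 2 * r ^ 2) (4 * lam ^ 2 * (2 * r)) r := by
    simpa using ((hasDerivAt_pow 2 r).const_mul (4 * lam ^ 2))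
  have hmain : HasDerivAt (F lam)
      (((0 - Real.exp (-2 * lam * r) * (-2 * lam)) +
        (2 * lam * Real.exp (-2 * lam * r) + 2 * lam * r * (Real.exp (-2 * lam * r) * (-2 * lam))))
        - (4 * lam ^ 2 * (2 * r) * E1 (2 * lam * r) +
           4 * lam ^ 2 * r ^ 2 * (-(Real.exp (-(2 * lam * r)) / (2 * lam * r)) * (2 * lam)))) r := by
    have hlin : HasDerivAt (fun r : ℝ => 2 * lam * r * Real.exp (-2 * lam * r))
        (2 * lam * Real.exp (-2 * lam * r) + 2 * lam * r * (Real.exp (-2 * lam * r) * (-2 * lam))) r :=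
      h2.mul hexp
    have hc : HasDerivAt (fun _ : ℝ => (1:ℝ)) 0 r := hasDerivAt_const r 1
    exact ((hc.sub hexp).add hlin).sub (hsq.mul hE)
  convert hmain using 1
  have hz' : (2 * lam * r) ≠ 0 := hz.ne'
  have : -(2 * lam * r) = -2 * lam * r := by ring
  rw [this]
  field_simp
  ring

lemma deriv_F_nonneg (lam : ℝ) (hlam : 0 < lam) {r : ℝ} (hr : 0 < r) :
    0 ≤ 4 * lam * Real.exp (-2 * lam * r) - 8 * lam ^ 2 * r * E1 (2 * lam * r) := by
  have hz : 0 < 2 * lam * r := by positivity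
  have h := E1_le hz
  have h2 : 8 * lam ^ 2 * r * E1 (2 * lam * r) ≤
      8 * lam ^ 2 * r * (Real.exp (-(2 * lam * r)) / (2 * lam * r)) := by
    apply mul_le_mul_of_nonneg_left h (by positivity)
  have h3 : 8 * lam ^ 2 * r * (Real.exp (-(2 * lam * r)) / (2 * lam * r)) =
      4 * lam * Real.exp (-2 * lam * r) := by
    have : -(2 * lam * r) = -2 * lam * r := by ring
    rw [this]; field_simp; ring
  linarith [h2, h3.le]

lemma T_bound (lam : ℝ) (hlam : 0 < lam) {r : ℝ} (hr : 0 < r) :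
    4 * lam ^ 2 * r ^ 2 * E1 (2 * lam * r) ≤ 4 * lam * r * Real.exp (-(lam * r)) := by
  have hz : 0 < 2 * lam * r := by positivity
  have h := E1_le' hz
  calc 4 * lam ^ 2 * r ^ 2 * E1 (2 * lam * r)
      ≤ 4 * lam ^ 2 * r ^ 2 * (2 / (2 * lam * r) * Real.exp (-(2 * lam * r) / 2)) :=
        mul_le_mul_of_nonneg_left h (by positivity)
    _ = 4 * lam * r * Real.exp (-(lam * r)) := by
        rw [show -(2 * lam * r) / 2 = -(lam * r) by ring]
        field_simp

lemma T_tendsto_zero_atTop (lam : ℝ) (hlam : 0 < lam) :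
    Tendsto (fun r => 4 * lam ^ 2 * r ^ 2 * E1 (2 * lam * r)) atTop (nhds 0) := by
  have hb : Tendsto (fun r : ℝ => 4 * lam * r * Real.exp (-(lam * r))) atTop (nhds 0) := by
    have h1 : Tendsto (fun r : ℝ => lam * r) atTop atTop :=
      tendsto_id.const_mul_atTop hlam
    have h2 := (tendsto_pow_mul_exp_neg_atTop_nhds_zero 1).comp h1
    have h3 : Tendsto (fun r : ℝ => 4 * ((lam * r) ^ 1 * Real.exp (-(lam * r)))) atTop
        (nhds (4 * 0)) := h2.const_mul 4
    simp only [pow_one, mul_zero] at h3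
    convert h3 using 2 with r
    ring
  apply squeeze_zero' (g := fun r : ℝ => 4 * lam * r * Real.exp (-(lam * r)))
  · filter_upwards [eventually_gt_atTop 0] with r hr
    have hz : 0 < 2 * lam * r := by positivity
    have := E1_nonneg hz
    positivity
  · filter_upwards [eventually_gt_atTop 0] with r hr
    exact T_bound lam hlam hr
  · exact hb

lemma T_tendsto_zero_nhds (lam : ℝ) (hlam : 0 < lam) :
    Tendsto (fun r => 4 * lam ^ 2 * r ^ 2 * E1 (2 * lam * r))
      (nhdsWithin 0 (Set.Ioi 0)) (nhds 0) := by
  have hb : Tendsto (fun r : ℝ => 4 * lam * r * Real.exp (-(lam * r)))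
      (nhdsWithin 0 (Set.Ioi 0)) (nhds 0) := by
    have hc : Continuous (fun r : ℝ => 4 * lam * r * Real.exp (-(lam * r))) := by
      continuity
    have := hc.continuousAt (x := (0:ℝ)).tendsto
    simp only [mul_zero, neg_zero, Real.exp_zero, mul_one] at this
    exact this.mono_left nhdsWithin_le_nhds
  apply squeeze_zero' (g := fun r : ℝ => 4 * lam * r * Real.exp (-(lam * r)))
  · filter_upwards [self_mem_nhdsWithin] with r hr
    have hr' : 0 < r := hr
    have hz : 0 < 2 * lam * r := by positivity
    have := E1_nonneg hz
    positivity
  · filter_upwards [self_mem_nhdsWithin] with r hr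
    exact T_bound lam hlam hr
  · exact hb

set_option maxHeartbeats 1000000 in
theorem stmt2 (lam : ℝ) (hlam : 0 < lam) :
    MonotoneOn (F lam) (Set.Ioi 0) ∧
    Tendsto (F lam) (nhdsWithin 0 (Set.Ioi 0)) (nhds 0) ∧
    Tendsto (F lam) atTop (nhds 1) := by
  refine ⟨?_, ?_, ?_⟩
  · apply monotoneOn_of_deriv_nonneg (convex_Ioi 0)
    · intro r hr
      exact ((hasDerivAt_F lam hlam hr).differentiableAt).continuousAt.continuousWithinAt
    · rw [interior_Ioi]
      intro r hr
      exact ((hasDerivAt_F lam hlam hr).differentiableAt).differentiableWithinAt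
    · rw [interior_Ioi]
      intro r hr
      rw [(hasDerivAt_F lam hlam hr).deriv]
      exact deriv_F_nonneg lam hlam hr
  · -- limit at 0+
    have h1 : Tendsto (fun r : ℝ => 1 - Real.exp (-2 * lam * r)
        + 2 * lam * r * Real.exp (-2 * lam * r)) (nhdsWithin 0 (Set.Ioi 0)) (nhds 0) := by
      have hce : Continuous (fun r : ℝ => Real.exp (-2 * lam * r)) :=
        Real.continuous_exp.comp (continuous_const.mul continuous_id)
      have hc : Continuous (fun r : ℝ => 1 - Real.exp (-2 * lam * r)
          + 2 * lam * r * Real.exp (-2 * lam * r)) :=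
        (continuous_const.sub hce).add ((continuous_const.mul continuous_id).mul hce)
      have h0 : Tendsto (fun r : ℝ => 1 - Real.exp (-2 * lam * r)
          + 2 * lam * r * Real.exp (-2 * lam * r)) (nhdsWithin 0 (Set.Ioi 0))
          (nhds (1 - Real.exp (-2 * lam * 0) + 2 * lam * 0 * Real.exp (-2 * lam * 0))) :=
        (hc.tendsto 0).mono_left nhdsWithin_le_nhds
      have heq : (1 : ℝ) - Real.exp (-2 * lam * 0) + 2 * lam * 0 * Real.exp (-2 * lam * 0)
          = 0 := by norm_num
      rw [heq] at h0
      exact h0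
    have h2 := h1.sub (T_tendsto_zero_nhds lam hlam)
    rw [show (0:ℝ) - 0 = 0 by norm_num] at h2
    exact h2
  · -- limit at infinity
    have hexp : Tendsto (fun r : ℝ => Real.exp (-2 * lam * r)) atTop (nhds 0) := by
      apply Real.tendsto_exp_atBot.comp
      apply Tendsto.const_mul_atTop_of_neg (by linarith : -2 * lam < 0) tendsto_id
    have hlin : Tendsto (fun r : ℝ => 2 * lam * r * Real.exp (-2 * lam * r)) atTop (nhds 0) := by
      have h1 : Tendsto (fun r : ℝ => 2 * lam * r) atTop atTop :=
        tendsto_id.const_mul_atTop (by positivity)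
      have h2 := (tendsto_pow_mul_exp_neg_atTop_nhds_zero 1).comp h1
      simp only [pow_one] at h2
      exact h2.congr fun r => by
        simp only [Function.comp_apply]
        ring_nf
    have h1 : Tendsto (fun r : ℝ => 1 - Real.exp (-2 * lam * r)
        + 2 * lam * r * Real.exp (-2 * lam * r)) atTop (nhds ((1 - 0) + 0)) :=
      ((tendsto_const_nhds (x := (1:ℝ)) (f := atTop)).sub hexp).add hlin
    have h2 := h1.sub (T_tendsto_zero_atTop lam hlam)
    rw [show ((1:ℝ) - 0) + 0 - 0 = 1 by norm_num] at h2
    exact h2
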